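/- Let (X, d_X) and (Y, d_Y) be metric spaces and equip X × Y with the metric whose square is d_X² + d_Y². Let μ₁, ν₁ be Borel probability measures on X and μ₂, ν₂ Borel probability measures on Y. Suppose r₁ : X → X is a measurable map pushing μ₁ forward to ν₁ with ∫ d_X(x, r₁(x))² dμ₁(x) = W₂²(μ₁, ν₁) (an optimal transport map), and similarly r₂ : Y → Y pushes μ₂ to ν₂ with ∫ d_Y(y, r₂(y))² dμ₂(y) = W₂²(μ₂, ν₂). Then the map r = (r₁, r₂) : X × Y → X × Y pushes μ₁ ⊗ μ₂ forward to ν₁ ⊗ ν₂ and satisfies ∫ d((x, y), r(x, y))² d(μ₁ ⊗ μ₂)(x, y) = W₂²(μ₁ ⊗ μ₂, ν₁ ⊗ ν₂); that is, r is an optimal transport map between μ₁ ⊗ μ₂ and ν₁ ⊗ ν₂. -/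

import Mathlib

open MeasureTheory ENNReal

/-- A coupling of `μ` and `ν` is a measure on the product whose first marginal is `μ`
and whose second marginal is `ν`. -/
def IsCoupling {Z : Type*} [MeasurableSpace Z]
    (γ : Measure (Z × Z)) (μ ν : Measure Z) : Prop :=
  γ.map Prod.fst = μ ∧ γ.map Prod.snd = ν

/-- The squared 2-Wasserstein distance associated with the squared-distance cost `c`:
the infimum over all couplings `γ` of `μ` and `ν` of `∫ c(x, y) dγ(x, y)`. -/
noncomputable def W2sq {Z : Type*} [MeasurableSpace Z]
    (c : Z → Z → ℝ≥0∞) (μ ν : Measure Z) : ℝ≥0∞ :=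
  ⨅ γ ∈ {γ : Measure (Z × Z) | IsCoupling γ μ ν}, ∫⁻ p, c p.1 p.2 ∂γ

/-- If `r₁` is an optimal transport map from `μ₁` to `ν₁` and `r₂` is an optimal
transport map from `μ₂` to `ν₂`, then `r = (r₁, r₂)` pushes `μ₁ ⊗ μ₂` forward to
`ν₁ ⊗ ν₂` and is an optimal transport map between them, for the metric on `X × Y`
whose square is `d_X² + d_Y²`. -/
theorem optimal_map_prod
    (X Y : Type*)
    [MetricSpace X] [MeasurableSpace X] [BorelSpace X]
    [MetricSpace Y] [MeasurableSpace Y] [BorelSpace Y]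
    (μ₁ ν₁ : Measure X) (μ₂ ν₂ : Measure Y)
    [IsProbabilityMeasure μ₁] [IsProbabilityMeasure ν₁]
    [IsProbabilityMeasure μ₂] [IsProbabilityMeasure ν₂]
    (r₁ : X → X) (r₂ : Y → Y)
    (hr₁ : Measurable r₁) (hr₂ : Measurable r₂)
    (hpush₁ : μ₁.map r₁ = ν₁) (hpush₂ : μ₂.map r₂ = ν₂)
    (hopt₁ : (∫⁻ x, edist x (r₁ x) ^ 2 ∂μ₁) = W2sq (fun x y : X => edist x y ^ 2) μ₁ ν₁)
    (hopt₂ : (∫⁻ y, edist y (r₂ y) ^ 2 ∂μ₂) = W2sq (fun x y : Y => edist x y ^ 2) μ₂ ν₂) :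
    (μ₁.prod μ₂).map (Prod.map r₁ r₂) = ν₁.prod ν₂
    ∧ (∫⁻ q, (edist q.1 (r₁ q.1) ^ 2 + edist q.2 (r₂ q.2) ^ 2) ∂(μ₁.prod μ₂))
        = W2sq (fun a b : X × Y => edist a.1 b.1 ^ 2 + edist a.2 b.2 ^ 2)
            (μ₁.prod μ₂) (ν₁.prod ν₂) := by
  have key1 : (μ₁.prod μ₂).map (Prod.map r₁ r₂) = ν₁.prod ν₂ := by
    rw [← Measure.map_prod_map _ _ hr₁ hr₂, hpush₁, hpush₂]
  refine ⟨key1, ?_⟩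
  set A := ∫⁻ x, edist x (r₁ x) ^ 2 ∂μ₁ with hA
  set B := ∫⁻ y, edist y (r₂ y) ^ 2 ∂μ₂ with hB
  set L := ∫⁻ q : X × Y, (edist q.1 (r₁ q.1) ^ 2 + edist q.2 (r₂ q.2) ^ 2) ∂(μ₁.prod μ₂)
    with hL
  set W := W2sq (fun a b : X × Y => edist a.1 b.1 ^ 2 + edist a.2 b.2 ^ 2)
    (μ₁.prod μ₂) (ν₁.prod ν₂) with hW
  -- Step 1 : `W ≤ L` via the coupling induced by the transport map.
  have hWL : W ≤ L := by
    set g : X × Y → (X × Y) × (X × Y) := fun q => (q, Prod.map r₁ r₂ q) with hg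
    have hgm : Measurable g :=
      measurable_id.prodMk ((hr₁.comp measurable_fst).prodMk (hr₂.comp measurable_snd))
    set γ₀ : Measure ((X × Y) × (X × Y)) := (μ₁.prod μ₂).map g with hγ₀
    have hcoup : IsCoupling γ₀ (μ₁.prod μ₂) (ν₁.prod ν₂) := by
      constructor
      · rw [hγ₀, Measure.map_map measurable_fst hgm]
        have h : Prod.fst ∘ g = id := rfl
        rw [h, Measure.map_id]
      · rw [hγ₀, Measure.map_map measurable_snd hgm]
        exact key1
    calc W ≤ ∫⁻ p, (edist p.1.1 p.2.1 ^ 2 + edist p.1.2 p.2.2 ^ 2) ∂γ₀ :=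
            iInf₂_le γ₀ hcoup
      _ ≤ ∫⁻ q, (edist (g q).1.1 (g q).2.1 ^ 2 + edist (g q).1.2 (g q).2.2 ^ 2)
            ∂(μ₁.prod μ₂) := lintegral_map_le _ g
      _ = L := rfl
  -- Step 2 : `L ≤ A + B` (using a measurable minorant with equal integral).
  have hLAB : L ≤ A + B := by
    obtain ⟨φ, hφm, hφle, hφeq⟩ := exists_measurable_le_lintegral_eq (μ₁.prod μ₂)
      (fun q : X × Y => edist q.1 (r₁ q.1) ^ 2 + edist q.2 (r₂ q.2) ^ 2)
    rw [hL, hφeq, lintegral_prod _ hφm.aemeasurable]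
    calc (∫⁻ x, ∫⁻ y, φ (x, y) ∂μ₂ ∂μ₁)
        ≤ ∫⁻ x, (edist x (r₁ x) ^ 2 + B) ∂μ₁ := by
          refine lintegral_mono fun x => ?_
          calc (∫⁻ y, φ (x, y) ∂μ₂)
              ≤ ∫⁻ y, (edist x (r₁ x) ^ 2 + edist y (r₂ y) ^ 2) ∂μ₂ :=
                lintegral_mono fun y => hφle (x, y)
            _ = edist x (r₁ x) ^ 2 + B := by
                rw [lintegral_add_left measurable_const]
                simp [hB]
      _ = A + B := by
          rw [lintegral_add_right _ measurable_const]
          simp [hA]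
  -- Step 3 : `A + B ≤ W` (every coupling of the products projects to couplings).
  have hABW : A + B ≤ W := by
    rw [hopt₁, hopt₂, hW]
    refine le_iInf fun γ => le_iInf fun hγ => ?_
    obtain ⟨hγ1, hγ2⟩ := hγ
    set πX : (X × Y) × (X × Y) → X × X := fun p => (p.1.1, p.2.1) with hπX
    set πY : (X × Y) × (X × Y) → Y × Y := fun p => (p.1.2, p.2.2) with hπY
    have hπXm : Measurable πX :=
      (measurable_fst.comp measurable_fst).prodMk (measurable_fst.comp measurable_snd)
    have hπYm : Measurable πY :=
      (measurable_snd.comp measurable_fst).prodMk (measurable_snd.comp measurable_snd)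
    have hcoupX : IsCoupling (γ.map πX) μ₁ ν₁ := by
      constructor
      · rw [Measure.map_map measurable_fst hπXm]
        have h : (Prod.fst ∘ πX) = (Prod.fst ∘ (Prod.fst : (X × Y) × (X × Y) → X × Y)) := rfl
        rw [h, ← Measure.map_map measurable_fst measurable_fst, hγ1, Measure.map_fst_prod]
        simp
      · rw [Measure.map_map measurable_snd hπXm]
        have h : (Prod.snd ∘ πX) = (Prod.fst ∘ (Prod.snd : (X × Y) × (X × Y) → X × Y)) := rfl
        rw [h, ← Measure.map_map measurable_fst measurable_snd, hγ2, Measure.map_fst_prod]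
        simp
    have hcoupY : IsCoupling (γ.map πY) μ₂ ν₂ := by
      constructor
      · rw [Measure.map_map measurable_fst hπYm]
        have h : (Prod.fst ∘ πY) = (Prod.snd ∘ (Prod.fst : (X × Y) × (X × Y) → X × Y)) := rfl
        rw [h, ← Measure.map_map measurable_snd measurable_fst, hγ1, Measure.map_snd_prod]
        simp
      · rw [Measure.map_map measurable_snd hπYm]
        have h : (Prod.snd ∘ πY) = (Prod.snd ∘ (Prod.snd : (X × Y) × (X × Y) → X × Y)) := rfl
        rw [h, ← Measure.map_map measurable_snd measurable_snd, hγ2, Measure.map_snd_prod]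
        simp
    have hXle : W2sq (fun x y : X => edist x y ^ 2) μ₁ ν₁
        ≤ ∫⁻ p, edist p.1.1 p.2.1 ^ 2 ∂γ := by
      refine le_trans (iInf₂_le (γ.map πX) hcoupX) ?_
      exact lintegral_map_le (fun p : X × X => edist p.1 p.2 ^ 2) πX
    have hYle : W2sq (fun x y : Y => edist x y ^ 2) μ₂ ν₂
        ≤ ∫⁻ p, edist p.1.2 p.2.2 ^ 2 ∂γ := by
      refine le_trans (iInf₂_le (γ.map πY) hcoupY) ?_
      exact lintegral_map_le (fun p : Y × Y => edist p.1 p.2 ^ 2) πY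
    calc W2sq (fun x y : X => edist x y ^ 2) μ₁ ν₁ + W2sq (fun x y : Y => edist x y ^ 2) μ₂ ν₂
        ≤ (∫⁻ p, edist p.1.1 p.2.1 ^ 2 ∂γ) + ∫⁻ p, edist p.1.2 p.2.2 ^ 2 ∂γ :=
          add_le_add hXle hYle
      _ ≤ ∫⁻ p, (edist p.1.1 p.2.1 ^ 2 + edist p.1.2 p.2.2 ^ 2) ∂γ :=
          le_lintegral_add _ _
  exact le_antisymm (hLAB.trans hABW) hWL
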